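/- Let G be a group and φ : G → Aut(G) an admissible action. Then the map (g, x) ↦ φ(g)(x) is an action of the group G on the deformed group G_φ by automorphisms, and the identity map G → G_φ is a bijective 1-cocycle with respect to this action: g · h = g ∘_φ φ(g)(h) for all g, h ∈ G. -/
import Mathlib


/-- The deformed multiplication `g₁ ∘_φ g₂ = g₁ · φ(g₁)⁻¹(g₂)`. -/
def dmul {G : Type*} [Group G] (φ : G →* MulAut G) (a b : G) : G :=
  a * (φ a)⁻¹ b

theorem dmul_action_and_cocycle {G : Type*} [Group G] (φ : G →* MulAut G)
    (hadm : ∀ g h : G, φ ((φ (g⁻¹)) h) = φ (g⁻¹ * h * g)) :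
    (∀ g x y : G, (φ g) (dmul φ x y) = dmul φ ((φ g) x) ((φ g) y)) ∧
    ∀ g h : G, g * h = dmul φ g ((φ g) h) := by
  have key : ∀ g x : G, φ ((φ g) x) = φ g * φ x * (φ g)⁻¹ := by
    intro g x
    have := hadm g⁻¹ x
    simp only [inv_inv] at this
    rw [this]
    simp [mul_assoc]
  constructor
  · intro g x y
    simp only [dmul, map_mul, key]
    simp [mul_assoc]
  · intro g h
    simp [dmul]
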